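/- Let μ > 1 and s ∈ ℕ. Then the power series Σ_{n≥0} x^n / 2^(μ^(s+n)) converges for every x ∈ ℝ (infinite radius of convergence), and its sum F(x) satisfies: for every polynomial P there exists x₁ such that F(x) ≥ |P(x)| for all x ≥ x₁ (i.e., F grows faster than any polynomial at +∞). -/

import Mathlib

open Filter Real

theorem superpolynomial_weight (μ : ℝ) (hμ : 1 < μ) (s : ℕ) :
    (∀ x : ℝ, Summable (fun n : ℕ => x ^ n / (2 : ℝ) ^ (μ ^ (s + n)))) ∧
    ∀ P : Polynomial ℝ, ∃ x₁ : ℝ, ∀ x : ℝ, x₁ ≤ x →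
      |P.eval x| ≤ ∑' n : ℕ, x ^ n / (2 : ℝ) ^ (μ ^ (s + n)) := by
  have h2 : (0:ℝ) < 2 := two_pos
  have hpow : ∀ n : ℕ, (0:ℝ) < (2:ℝ) ^ (μ ^ (s + n)) :=
    fun n => Real.rpow_pos_of_pos h2 _
  have hsum : ∀ x : ℝ, Summable (fun n : ℕ => x ^ n / (2 : ℝ) ^ (μ ^ (s + n))) := by
    intro x
    rcases eq_or_ne x 0 with rfl | hx
    · apply summable_of_ne_finset_zero (s := ({0} : Finset ℕ))
      intro i hi
      simp only [Finset.mem_singleton] at hi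
      simp [zero_pow hi]
    · apply summable_of_ratio_test_tendsto_lt_one zero_lt_one
        (Filter.Eventually.of_forall fun n => by
          have := hpow n
          have hx' : x ^ n ≠ 0 := pow_ne_zero _ hx
          exact div_ne_zero hx' (ne_of_gt this))
      have hratio : ∀ n : ℕ,
          ‖x ^ (n+1) / (2:ℝ) ^ (μ ^ (s + (n+1)))‖ / ‖x ^ n / (2:ℝ) ^ (μ ^ (s + n))‖
          = |x| * (2:ℝ) ^ (μ ^ (s + n) - μ ^ (s + (n+1))) := by
        intro n
        have hBn : ((2:ℝ) ^ (μ ^ (s + n))) ≠ 0 := (hpow n).ne'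
        have hBn1 : ((2:ℝ) ^ (μ ^ (s + (n+1)))) ≠ 0 := (hpow (n+1)).ne'
        have hax : |x| ≠ 0 := abs_ne_zero.mpr hx
        rw [Real.rpow_sub h2, Real.norm_eq_abs, Real.norm_eq_abs, abs_div, abs_div,
          abs_pow, abs_pow, abs_of_pos (hpow n), abs_of_pos (hpow (n+1))]
        field_simp
        ring
      have hexp : Tendsto (fun n : ℕ => μ ^ (s + n) - μ ^ (s + (n+1))) atTop atBot := by
        have h1 : Tendsto (fun n : ℕ => μ ^ (s + n)) atTop atTop := by
          have := (tendsto_pow_atTop_atTop_of_one_lt hμ).comp (tendsto_add_atTop_nat s)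
          simpa [Function.comp_def, add_comm] using this
        have heq : ∀ n : ℕ, μ ^ (s + n) - μ ^ (s + (n+1)) = μ ^ (s + n) * (1 - μ) := by
          intro n
          have : s + (n + 1) = (s + n) + 1 := by ring
          rw [this, pow_succ]
          ring
        simp only [heq]
        exact h1.atTop_mul_const_of_neg (by linarith)
      have h2pow : Tendsto (fun n : ℕ => (2:ℝ) ^ (μ ^ (s + n) - μ ^ (s + (n+1))))
          atTop (nhds 0) := by
        have hlog : (0:ℝ) < Real.log 2 := Real.log_pos (by norm_num)
        have : Tendsto (fun n : ℕ =>
            Real.exp (Real.log 2 * (μ ^ (s + n) - μ ^ (s + (n+1))))) atTop (nhds 0) :=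
          Real.tendsto_exp_atBot.comp (hexp.const_mul_atBot hlog)
        convert this using 2 with n
        rw [Real.rpow_def_of_pos h2]
      have : Tendsto (fun n : ℕ => |x| * (2:ℝ) ^ (μ ^ (s + n) - μ ^ (s + (n+1))))
          atTop (nhds (|x| * 0)) := h2pow.const_mul _
      rw [mul_zero] at this
      simpa only [hratio] using this
  refine ⟨hsum, fun P => ?_⟩
  set d := P.natDegree with hd
  set B := (2:ℝ) ^ (μ ^ (s + (d+1))) with hBdef
  have hB : 0 < B := hpow (d+1)
  set C := ∑ i ∈ Finset.range (d+1), |P.coeff i| with hCdef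
  refine ⟨max 1 (C * B), fun x hx => ?_⟩
  have hx1 : (1:ℝ) ≤ x := le_trans (le_max_left _ _) hx
  have hx0 : (0:ℝ) < x := lt_of_lt_of_le zero_lt_one hx1
  have hPbound : |P.eval x| ≤ C * x ^ d := by
    rw [Polynomial.eval_eq_sum_range]
    calc |∑ i ∈ Finset.range (d+1), P.coeff i * x ^ i|
        ≤ ∑ i ∈ Finset.range (d+1), |P.coeff i * x ^ i| :=
          Finset.abs_sum_le_sum_abs _ _
      _ ≤ ∑ i ∈ Finset.range (d+1), |P.coeff i| * x ^ d := by
          apply Finset.sum_le_sum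
          intro i hi
          rw [abs_mul, abs_pow, abs_of_pos hx0]
          exact mul_le_mul_of_nonneg_left
            (pow_le_pow_right₀ hx1 (Nat.lt_succ_iff.mp (Finset.mem_range.mp hi)))
            (abs_nonneg _)
      _ = C * x ^ d := by rw [← Finset.sum_mul]
  have hterm : C * x ^ d ≤ x ^ (d+1) / B := by
    rw [le_div_iff₀ hB, pow_succ]
    have hxCB : C * B ≤ x := le_trans (le_max_right _ _) hx
    calc C * x ^ d * B = (C * B) * x ^ d := by ring
      _ ≤ x * x ^ d := mul_le_mul_of_nonneg_right hxCB (pow_nonneg hx0.le d)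
      _ = x ^ d * x := mul_comm _ _
  have hle : x ^ (d+1) / B ≤ ∑' n : ℕ, x ^ n / (2:ℝ) ^ (μ ^ (s + n)) :=
    Summable.le_tsum (hsum x) (d+1)
      (fun j _ => div_nonneg (pow_nonneg hx0.le _) (hpow j).le)
  linarith
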